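/- Define g: Λ^ℓ V × Λ^ℓ V → K_ℓ by g(u,v) := Λ^ℓ h(u,v) + j·(−1)^ℓ·Pf(u,v) (n = 2ℓ). Then g is K_ℓ-linear in the right argument, σ-semilinear in the left argument over F, and g(v,u) = α(g(u,v)) where α(x_0 + j x_1) := σ(x_0) + (−1)^ℓ j x_1; i.e., g is an α-hermitian form on the right K_ℓ-module Λ^ℓ V. -/

import Mathlib

open ExteriorAlgebra

/-- The wedge product of a family of vectors in the exterior algebra. -/
noncomputable def wedgeFam (F : Type*) {V : Type*} [Field F] [AddCommGroup V] [Module F V]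
    {k : ℕ} (u : Fin k → V) : ExteriorAlgebra F V :=
  (List.ofFn fun i => ExteriorAlgebra.ι F (u i)).prod

/-- The element `x₀ + j·x₁` of the algebra `K_ℓ`, realized as the 2×2 matrix
`[[x₀, δ·σ(x₁)], [x₁, σ(x₀)]]` over `F`. -/
def Kmk {F : Type*} [Field F] (σ : F → F) (δ x0 x1 : F) : Matrix (Fin 2) (Fin 2) F :=
  !![x0, δ * σ x1; x1, σ x0]

private lemma extIotaMulComm {F V : Type*} [Field F] [AddCommGroup V] [Module F V]
    (a : V) {m : ℕ} {y : ExteriorAlgebra F V} (hy : y ∈ ⋀[F]^m V) :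
    ExteriorAlgebra.ι F a * y = ((-1 : F) ^ m) • (y * ExteriorAlgebra.ι F a) := by
  induction hy using Submodule.pow_induction_on_left' with
  | algebraMap r => simp [Algebra.commutes]
  | add x y i hx hy ihx ihy => rw [mul_add, ihx, ihy, add_mul, smul_add]
  | mem_mul mm hm i x hx ih =>
    obtain ⟨c, rfl⟩ := hm
    have swap : ExteriorAlgebra.ι F a * ExteriorAlgebra.ι F c
        = -(ExteriorAlgebra.ι F c * ExteriorAlgebra.ι F a) :=
      eq_neg_of_add_eq_zero_left (ExteriorAlgebra.ι_add_mul_swap a c)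
    calc ExteriorAlgebra.ι F a * (ExteriorAlgebra.ι F c * x)
        = (ExteriorAlgebra.ι F a * ExteriorAlgebra.ι F c) * x := (mul_assoc _ _ _).symm
      _ = -(ExteriorAlgebra.ι F c * (ExteriorAlgebra.ι F a * x)) := by
          rw [swap, neg_mul, mul_assoc]
      _ = -(ExteriorAlgebra.ι F c * ((-1 : F) ^ i • (x * ExteriorAlgebra.ι F a))) := by rw [ih]
      _ = ((-1 : F) ^ (i + 1)) • (ExteriorAlgebra.ι F c * x * ExteriorAlgebra.ι F a) := by
          rw [mul_smul_comm, ← neg_smul, pow_succ, mul_neg_one, mul_assoc]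

private lemma extPowMulComm {F V : Type*} [Field F] [AddCommGroup V] [Module F V]
    {k m : ℕ} {x y : ExteriorAlgebra F V} (hx : x ∈ ⋀[F]^k V) (hy : y ∈ ⋀[F]^m V) :
    x * y = ((-1 : F) ^ (k * m)) • (y * x) := by
  induction hx using Submodule.pow_induction_on_left' with
  | algebraMap r => simp [Algebra.commutes]
  | add x x' i hx hx' ih ih' => rw [add_mul, ih, ih', mul_add, smul_add]
  | mem_mul mm hm i x hx ih =>
    obtain ⟨a, rfl⟩ := hm
    calc (ExteriorAlgebra.ι F a * x) * y
        = ExteriorAlgebra.ι F a * (x * y) := mul_assoc _ _ _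
      _ = ExteriorAlgebra.ι F a * ((-1 : F) ^ (i * m) • (y * x)) := by rw [ih]
      _ = (-1 : F) ^ (i * m) • ((ExteriorAlgebra.ι F a * y) * x) := by
          rw [mul_smul_comm, mul_assoc]
      _ = (-1 : F) ^ (i * m) • (((-1 : F) ^ m • (y * ExteriorAlgebra.ι F a)) * x) := by
          rw [extIotaMulComm a hy]
      _ = ((-1 : F) ^ (i.succ * m)) • (y * (ExteriorAlgebra.ι F a * x)) := by
          rw [smul_mul_assoc, smul_smul, ← pow_add, Nat.succ_mul, mul_assoc]

private lemma Kmk_congr {F : Type*} [Field F] (σ : F → F) (δ : F) {a c a' c' : F}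
    (h1 : a = a') (h2 : c = c') : Kmk σ δ a c = Kmk σ δ a' c' := by rw [h1, h2]

private lemma Kmk_add {F : Type*} [Field F] (σ : F ≃+* F) (δ a c a' c' : F) :
    Kmk ⇑σ δ a c + Kmk ⇑σ δ a' c' = Kmk ⇑σ δ (a + a') (c + c') := by
  unfold Kmk
  ext i j
  fin_cases i <;> fin_cases j <;> simp [Matrix.add_apply, map_add, mul_add]

private lemma Kmk_mul {F : Type*} [Field F] (σ : F ≃+* F) (hσ : ∀ a, σ (σ a) = a)
    (δ : F) (hδR : σ δ = δ) (a c y0 y1 : F) :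
    Kmk ⇑σ δ a c * Kmk ⇑σ δ y0 y1
      = Kmk ⇑σ δ (a * y0 + δ * σ c * y1) (c * y0 + σ a * y1) := by
  unfold Kmk
  ext i j
  fin_cases i <;> fin_cases j <;>
    simp [Matrix.mul_apply, Fin.sum_univ_two, map_add, map_mul, hσ, hδR] <;> ring

/-- the form `g(u,v) := Λ^ℓh(u,v) + j·(−1)^ℓ·Pf(u,v)` (values in
`K_ℓ = F ⊕ jF`, `n = 2ℓ`) is additive in both arguments, `K_ℓ`-linear in the right
argument, `σ`-semilinear in the left argument, and satisfies `g(v,u) = α(g(u,v))`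
where `α(x₀ + j x₁) = σ(x₀) + (−1)^ℓ j x₁`; i.e. `g` is an `α`-hermitian form on the
right `K_ℓ`-module `Λ^ℓ V` (with `w·(y₀ + j y₁) = y₀ • w + y₁ • J w`). -/
theorem g_is_alpha_hermitian
    {F V : Type*} [Field F] [AddCommGroup V] [Module F V] [FiniteDimensional F V]
    (n ℓ : ℕ) (hfr : Module.finrank F V = n) (hn2 : n = 2 * ℓ)
    (σ : F ≃+* F) (hσ : ∀ a, σ (σ a) = a)
    (h : V → V → F)
    (h_add_left : ∀ u u' w, h (u + u') w = h u w + h u' w)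
    (h_add_right : ∀ u w w', h u (w + w') = h u w + h u w')
    (h_smul_left : ∀ (s : F) u w, h (s • u) w = σ s * h u w)
    (h_smul_right : ∀ (s : F) u w, h u (s • w) = s * h u w)
    (h_herm : ∀ u w, h w u = σ (h u w))
    (h_nondeg : ∀ u, (∀ w, h u w = 0) → u = 0)
    (v : Module.Basis (Fin n) F V)
    (h_orth : ∀ i j, i ≠ j → h (v i) (v j) = 0)
    (H : ExteriorAlgebra F V → ExteriorAlgebra F V → F)
    (H_add_left : ∀ x x' y, H (x + x') y = H x y + H x' y)
    (H_add_right : ∀ x y y', H x (y + y') = H x y + H x y')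
    (H_smul_left : ∀ (s : F) x y, H (s • x) y = σ s * H x y)
    (H_smul_right : ∀ (s : F) x y, H x (s • y) = s * H x y)
    (H_det : ∀ (k : ℕ) (u w : Fin k → V),
      H (wedgeFam F u) (wedgeFam F w) = Matrix.det (Matrix.of fun i j => h (u i) (w j)))
    (H_cross : ∀ (k m : ℕ), k ≠ m → ∀ x ∈ ⋀[F]^k V, ∀ y ∈ ⋀[F]^m V, H x y = 0)
    (b : ExteriorAlgebra F V →ₗ[F] F)
    (hb_inj : ∀ z ∈ ⋀[F]^n V, b z = 0 → z = 0)
    (hb_off : ∀ (k : ℕ), k ≠ n → ∀ z ∈ ⋀[F]^k V, b z = 0)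
    (J : ExteriorAlgebra F V → ExteriorAlgebra F V)
    (hJ_mem : ∀ x ∈ ⋀[F]^ℓ V, J x ∈ ⋀[F]^ℓ V)
    (hJ_char : ∀ x ∈ ⋀[F]^ℓ V, ∀ y ∈ ⋀[F]^ℓ V, b (J x * y) = H x y)
    (hJ_add : ∀ x y, J (x + y) = J x + J y)
    (hJ_smul : ∀ (s : F) x, J (s • x) = σ s • J x)
    (δ : F) (hδR : σ δ = δ) (hδ0 : δ ≠ 0)
    (hJsq : ∀ x ∈ ⋀[F]^ℓ V, J (J x) = δ • x) :
    ∀ X ∈ ⋀[F]^ℓ V, ∀ Y ∈ ⋀[F]^ℓ V,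
      -- additive in the right argument
      (∀ Y' ∈ ⋀[F]^ℓ V,
        Kmk ⇑σ δ (H X (Y + Y')) ((-1 : F) ^ ℓ * b (X * (Y + Y')))
          = Kmk ⇑σ δ (H X Y) ((-1 : F) ^ ℓ * b (X * Y))
            + Kmk ⇑σ δ (H X Y') ((-1 : F) ^ ℓ * b (X * Y'))) ∧
      -- additive in the left argument
      (∀ X' ∈ ⋀[F]^ℓ V,
        Kmk ⇑σ δ (H (X + X') Y) ((-1 : F) ^ ℓ * b ((X + X') * Y))
          = Kmk ⇑σ δ (H X Y) ((-1 : F) ^ ℓ * b (X * Y))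
            + Kmk ⇑σ δ (H X' Y) ((-1 : F) ^ ℓ * b (X' * Y))) ∧
      -- K_ℓ-linear in the right argument: g(X, Y·(y₀ + j y₁)) = g(X,Y)·(y₀ + j y₁)
      (∀ y0 y1 : F,
        Kmk ⇑σ δ (H X (y0 • Y + y1 • J Y))
            ((-1 : F) ^ ℓ * b (X * (y0 • Y + y1 • J Y)))
          = Kmk ⇑σ δ (H X Y) ((-1 : F) ^ ℓ * b (X * Y)) * Kmk ⇑σ δ y0 y1) ∧
      -- σ-semilinear in the left argument: g(s•X, Y) = σ(s)·g(X,Y)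
      (∀ s : F,
        Kmk ⇑σ δ (H (s • X) Y) ((-1 : F) ^ ℓ * b ((s • X) * Y))
          = Kmk ⇑σ δ (σ s) 0 * Kmk ⇑σ δ (H X Y) ((-1 : F) ^ ℓ * b (X * Y))) ∧
      -- α-hermitian: g(Y,X) = α(g(X,Y))
      (Kmk ⇑σ δ (H Y X) ((-1 : F) ^ ℓ * b (Y * X))
        = Kmk ⇑σ δ (σ (H X Y)) ((-1 : F) ^ ℓ * ((-1 : F) ^ ℓ * b (X * Y)))) := by
    -- basic sign facts
  have sσpow : σ ((-1 : F) ^ ℓ) = (-1 : F) ^ ℓ := by rw [map_pow, map_neg, map_one]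
  have hsq : ((-1 : F) ^ ℓ) * ((-1 : F) ^ ℓ) = 1 := by
    rw [← pow_add, ← two_mul, pow_mul]; norm_num
  have hsignℓ : ((-1 : F) ^ (ℓ * ℓ)) = (-1 : F) ^ ℓ := by
    rcases Nat.even_or_odd ℓ with he | ho
    · rw [(he.mul_left ℓ).neg_one_pow, he.neg_one_pow]
    · rw [(ho.mul ho).neg_one_pow, ho.neg_one_pow]
  -- hermitian symmetry of H on degree-ℓ elements
  have key : ∀ u w : Fin ℓ → V,
      H (wedgeFam F w) (wedgeFam F u) = σ (H (wedgeFam F u) (wedgeFam F w)) := by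
    intro u w
    rw [H_det, H_det]
    have hM : (Matrix.of fun i j => h (w i) (u j))
        = ((Matrix.of fun i j => h (u i) (w j)).map ⇑σ).transpose := by
      apply Matrix.ext
      intro i j
      show h (w i) (u j) = σ (h (u j) (w i))
      exact h_herm (u j) (w i)
    rw [hM, Matrix.det_transpose]
    have := RingHom.map_det (σ : F →+* F) (Matrix.of fun i j => h (u i) (w j))
    simp only [RingHom.mapMatrix_apply, RingEquiv.coe_toRingHom] at this
    exact this.symm
  have Hz : ∀ y : ExteriorAlgebra F V, H 0 y = 0 := by
    intro y
    have := H_smul_left 0 0 y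
    rwa [zero_smul, map_zero, zero_mul] at this
  have Hz' : ∀ x : ExteriorAlgebra F V, H x 0 = 0 := by
    intro x
    have := H_smul_right 0 x 0
    rwa [zero_smul, zero_mul] at this
  have Hsymm : ∀ x ∈ ⋀[F]^ℓ V, ∀ y ∈ ⋀[F]^ℓ V, H y x = σ (H x y) := by
    intro x hx
    rw [← ExteriorAlgebra.ιMulti_span_fixedDegree] at hx
    induction hx using Submodule.span_induction with
    | mem x hxm =>
      intro y hy
      rw [← ExteriorAlgebra.ιMulti_span_fixedDegree] at hy
      induction hy using Submodule.span_induction with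
      | mem y hym =>
        obtain ⟨u, rfl⟩ := hxm
        obtain ⟨w, rfl⟩ := hym
        exact key u w
      | zero => rw [Hz, Hz', map_zero]
      | add y y' hy hy' ih ih' => rw [H_add_left, H_add_right, ih, ih', map_add]
      | smul s y hy ih => rw [H_smul_left, H_smul_right, map_mul σ, ih]
    | zero => intro y hy; rw [Hz', Hz, map_zero]
    | add x x' hx hx' ih ih' =>
      intro y hy
      rw [H_add_right, H_add_left, ih y hy, ih' y hy, map_add]
    | smul s x hx ih =>
      intro y hy
      rw [H_smul_right, H_smul_left, map_mul σ, hσ, ih y hy]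
  intro X hX Y hY
  have hJY : J Y ∈ ⋀[F]^ℓ V := hJ_mem Y hY
  have comm : b (Y * X) = (-1 : F) ^ ℓ * b (X * Y) := by
    rw [extPowMulComm hY hX, map_smul, smul_eq_mul, hsignℓ]
  have factXJY : b (X * J Y) = (-1 : F) ^ ℓ * σ (H X Y) := by
    have h2 : H Y X = (-1 : F) ^ ℓ * b (X * J Y) := by
      rw [← hJ_char Y hY X hX, extPowMulComm hJY hX, map_smul, smul_eq_mul, hsignℓ]
    rw [Hsymm X hX Y hY] at h2
    calc b (X * J Y) = ((-1 : F) ^ ℓ * (-1 : F) ^ ℓ) * b (X * J Y) := by rw [hsq, one_mul]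
      _ = (-1 : F) ^ ℓ * σ (H X Y) := by rw [mul_assoc, ← h2]
  have factHXJY : H X (J Y) = δ * ((-1 : F) ^ ℓ * σ (b (X * Y))) := by
    rw [Hsymm (J Y) hJY X hX, ← hJ_char (J Y) hJY X hX, hJsq Y hY, smul_mul_assoc,
      map_smul, smul_eq_mul, map_mul σ, hδR, comm, map_mul σ, sσpow]
  have bexp : ∀ y0 y1 : F,
      b (X * (y0 • Y + y1 • J Y)) = y0 * b (X * Y) + y1 * b (X * J Y) := by
    intro y0 y1
    rw [mul_add, mul_smul_comm, mul_smul_comm, map_add, map_smul, map_smul,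
      smul_eq_mul, smul_eq_mul]
  have Hexp : ∀ y0 y1 : F,
      H X (y0 • Y + y1 • J Y) = y0 * H X Y + y1 * H X (J Y) := by
    intro y0 y1
    rw [H_add_right, H_smul_right, H_smul_right]
  refine ⟨?_, ?_, ?_, ?_, ?_⟩
  · intro Y' hY'
    rw [Kmk_add]
    refine Kmk_congr _ _ ?_ ?_
    · rw [H_add_right]
    · rw [mul_add, map_add]; ring
  · intro X' hX'
    rw [Kmk_add]
    refine Kmk_congr _ _ ?_ ?_
    · rw [H_add_left]
    · rw [add_mul, map_add]; ring
  · intro y0 y1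
    rw [Kmk_mul σ hσ δ hδR]
    refine Kmk_congr _ _ ?_ ?_
    · rw [Hexp, factHXJY, map_mul σ, sσpow]; ring
    · rw [bexp, factXJY]
      linear_combination y1 * σ (H X Y) * hsq
  · intro s
    rw [Kmk_mul σ hσ δ hδR]
    refine Kmk_congr _ _ ?_ ?_
    · rw [H_smul_left, map_zero]; ring
    · rw [smul_mul_assoc, map_smul, smul_eq_mul, hσ]; ring
  · refine Kmk_congr _ _ ?_ ?_
    · exact Hsymm X hX Y hY
    · rw [comm]
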